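/- Let p be a prime with p ≡ 2 (mod 3). Then the Legendre symbol (D_p(1,1)/p) equals the Legendre symbol (-2/p). -/

import Mathlib

open Finset
namespace St2
variable {p : ℕ} [hp : Fact p.Prime]




lemma p_ge_5 (hp2 : p ≠ 2) (hp3 : p % 3 = 2) : 5 ≤ p := by
  have h := hp.out.two_le
  rcases Nat.lt_or_ge p 5 with h5 | h5
  · interval_cases p <;> simp_all
  · exact h5

lemma nat_ne_zero (hp2 : p ≠ 2) (hp3 : p % 3 = 2) {n : ℕ} (h1 : 0 < n) (h2 : n < 5) :
    ((n : ℕ) : ZMod p) ≠ 0 := by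
  have h5 := p_ge_5 hp2 hp3
  rw [Ne, ZMod.natCast_eq_zero_iff]
  intro h
  have := Nat.le_of_dvd h1 h
  omega

lemma three_nz (hp2 : p ≠ 2) (hp3 : p % 3 = 2) : (3 : ZMod p) ≠ 0 := by
  have := nat_ne_zero hp2 hp3 (n := 3) (by norm_num) (by norm_num); simpa using this

lemma two_nz (hp2 : p ≠ 2) (hp3 : p % 3 = 2) : (2 : ZMod p) ≠ 0 := by
  have := nat_ne_zero hp2 hp3 (n := 2) (by norm_num) (by norm_num); simpa using this

lemma quad_ne_zero (hp2 : p ≠ 2) (hp3 : p % 3 = 2) (w : ZMod p) : w^2 + w + 1 ≠ 0 := by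
  intro h
  have hw1 : w ≠ 1 := by
    rintro rfl
    exact three_nz hp2 hp3 (by linear_combination h)
  have hw3 : w ^ 3 = 1 := by linear_combination (w - 1) * h
  have hw0 : w ≠ 0 := by rintro rfl; simp at h
  have h3 : orderOf w = 3 := by
    have hdvd : orderOf w ∣ 3 := orderOf_dvd_of_pow_eq_one hw3
    rcases (Nat.prime_three).eq_one_or_self_of_dvd _ hdvd with h1 | h1
    · exact absurd (orderOf_eq_one_iff.mp h1) hw1
    · exact h1
  have hcard : w ^ (p - 1) = 1 := ZMod.pow_card_sub_one_eq_one hw0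
  have hdvd : (3 : ℕ) ∣ p - 1 := h3 ▸ orderOf_dvd_of_pow_eq_one hcard
  have := hp.out.two_le
  omega





/-- The key sum `T n = ∑_{w ∈ (ZMod p)ˣ} w^n / (w²+w+1)`. -/
noncomputable def T (p : ℕ) [Fact p.Prime] (n : ℕ) : ZMod p :=
  ∑ w : (ZMod p)ˣ, (w : ZMod p) ^ n * ((w : ZMod p) ^ 2 + (w : ZMod p) + 1)⁻¹

lemma sum_units_pow (n : ℕ) :
    ∑ w : (ZMod p)ˣ, (w : ZMod p) ^ n = if (p - 1) ∣ n then -1 else 0 := by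
  classical
  have := FiniteField.sum_pow_units (ZMod p) n
  rw [ZMod.card] at this
  rw [← this]

lemma T_rec (hp2 : p ≠ 2) (hp3 : p % 3 = 2) (n : ℕ) :
    T p (n + 2) + T p (n + 1) + T p n = if (p - 1) ∣ n then -1 else 0 := by
  rw [← sum_units_pow n, T, T, T, ← Finset.sum_add_distrib, ← Finset.sum_add_distrib]
  refine Finset.sum_congr rfl fun w _ => ?_
  have hq := quad_ne_zero hp2 hp3 (w : ZMod p)
  linear_combination ((w : ZMod p) ^ n) * mul_inv_cancel₀ hq

lemma T_symm (hp2 : p ≠ 2) (hp3 : p % 3 = 2) : T p 2 = T p 0 := by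
  rw [T, T]
  rw [← Equiv.sum_comp (Equiv.inv (ZMod p)ˣ)]
  refine Finset.sum_congr rfl fun w _ => ?_
  have hw : (w : ZMod p) ≠ 0 := w.ne_zero
  have hq := quad_ne_zero hp2 hp3 (w : ZMod p)
  have hq' := quad_ne_zero hp2 hp3 ((w : ZMod p)⁻¹)
  simp only [Equiv.inv_apply, Units.val_inv_eq_inv_val, pow_zero, one_mul]
  have h1 : ((w:ZMod p)⁻¹)^2 + (w:ZMod p)⁻¹ + 1
      = ((w:ZMod p)^2)⁻¹ * ((w:ZMod p)^2 + (w:ZMod p) + 1) := by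
    field_simp
    ring
  rw [h1, mul_inv, inv_inv, ← mul_assoc, ← mul_pow, inv_mul_cancel₀ hw, one_pow, one_mul]

lemma two_mul_half (hp2 : p ≠ 2) : 2 * (p / 2) = p - 1 := by
  have := hp.out.two_le
  obtain ⟨k, hk⟩ := hp.out.odd_of_ne_two hp2
  omega

lemma sum_all_pow {n : ℕ} (h0 : n < p - 1) :
    ∑ t : ZMod p, t ^ n = 0 := by
  have := FiniteField.sum_pow_lt_card_sub_one (ZMod p) n (by rwa [ZMod.card])
  exact this

lemma card_sqrt (hp2 : p ≠ 2) (hp3 : p % 3 = 2) (s : ZMod p) :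
    ((Finset.univ.filter (fun u : ZMod p => u ^ 2 = s)).card : ZMod p)
      = 1 + s ^ (p / 2) := by
  classical
  rcases eq_or_ne s 0 with rfl | hs
  · have h1 : (Finset.univ.filter (fun u : ZMod p => u ^ 2 = 0)) = {0} := by
      ext u; simp [pow_eq_zero_iff]
    rw [h1]
    have hm : p / 2 ≠ 0 := by have := p_ge_5 hp2 hp3; omega
    simp [zero_pow hm]
  rcases ZMod.pow_div_two_eq_neg_one_or_one p hs with h1 | h1
  · obtain ⟨y, hy⟩ := (ZMod.euler_criterion p hs).mpr h1
    have hy' : y ^ 2 = s := by rw [hy]; ring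
    have hy0 : y ≠ 0 := by rintro rfl; rw [hy] at hs; simp at hs
    have h2 : (Finset.univ.filter (fun u : ZMod p => u ^ 2 = s)) = {y, -y} := by
      ext u
      simp only [Finset.mem_filter, Finset.mem_univ, true_and, Finset.mem_insert,
        Finset.mem_singleton]
      constructor
      · intro h
        have h3 : (u - y) * (u + y) = 0 := by linear_combination h - hy'
        rcases mul_eq_zero.mp h3 with h' | h'
        · left; linear_combination h'
        · right; linear_combination h'
      · rintro (rfl | rfl) <;> linear_combination hy'
    have hne : y ≠ -y := by
      intro h
      have h4 : (2 : ZMod p) * y = 0 := by linear_combination h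
      rcases mul_eq_zero.mp h4 with h' | h'
      · exact two_nz hp2 hp3 h'
      · exact hy0 h'
    rw [h2, Finset.card_insert_of_notMem (by simpa using hne), Finset.card_singleton, h1]
    push_cast
    ring
  · have h2 : (Finset.univ.filter (fun u : ZMod p => u ^ 2 = s)) = ∅ := by
      ext u
      simp only [Finset.mem_filter, Finset.mem_univ, true_and, Finset.notMem_empty,
        iff_false]
      intro h
      have hsq : IsSquare s := ⟨u, by rw [← h]; ring⟩
      have h5 := (ZMod.euler_criterion p hs).mp hsq
      rw [h5] at h1
      have h6 : (2 : ZMod p) = 0 := by linear_combination h1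
      exact two_nz hp2 hp3 h6
    rw [h2, h1]
    simp

lemma sum_sq_comp (hp2 : p ≠ 2) (hp3 : p % 3 = 2) (h : ZMod p → ZMod p) :
    ∑ u : ZMod p, h (u ^ 2) = ∑ s : ZMod p, (1 + s ^ (p / 2)) * h s := by
  classical
  rw [Finset.sum_comp h (fun u : ZMod p => u ^ 2)]
  have h1 : ∀ s ∈ (Finset.univ : Finset (ZMod p)).image (fun u : ZMod p => u ^ 2),
      (Finset.univ.filter (fun u : ZMod p => u ^ 2 = s)).card • h s
        = (1 + s ^ (p / 2)) * h s := fun s _ => by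
    rw [← card_sqrt hp2 hp3 s, nsmul_eq_mul]
  rw [Finset.sum_congr rfl h1]
  refine Finset.sum_subset (Finset.subset_univ _) ?_
  intro s _ hs
  have h0 : (Finset.univ.filter (fun u : ZMod p => u ^ 2 = s)).card = 0 := by
    rw [Finset.card_eq_zero, Finset.filter_eq_empty_iff]
    intro u _ h'
    exact hs (Finset.mem_image.mpr ⟨u, Finset.mem_univ u, h'⟩)
  have h2 := card_sqrt hp2 hp3 s
  rw [h0] at h2
  rw [← h2]
  simp
lemma chi_neg_three (hp2 : p ≠ 2) (hp3 : p % 3 = 2) :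
    (-3 : ZMod p) ^ (p / 2) = -1 := by
  have h3 : (3 : ZMod p) ≠ 0 := three_nz hp2 hp3
  have h2 : (2 : ZMod p) ≠ 0 := two_nz hp2 hp3
  have hn3 : (-3 : ZMod p) ≠ 0 := by simpa using h3
  rcases ZMod.pow_div_two_eq_neg_one_or_one p hn3 with h1 | h1
  · exfalso
    obtain ⟨x, hx⟩ := (ZMod.euler_criterion p hn3).mpr h1
    have hx' : x ^ 2 = -3 := by rw [hx]; ring
    set c : ZMod p := 2⁻¹ with hc
    have t2 : (2 : ZMod p) * c = 1 := mul_inv_cancel₀ h2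
    refine quad_ne_zero hp2 hp3 ((x - 1) * c) ?_
    linear_combination (c^2) * hx' + ((-x - 1) * c - 1) * t2
  · exact h1

lemma T_zero (hp2 : p ≠ 2) (hp3 : p % 3 = 2) : T p 0 = -(3⁻¹ : ZMod p) := by
  classical
  have h5 := p_ge_5 hp2 hp3
  have h2 : (2 : ZMod p) ≠ 0 := two_nz hp2 hp3
  have h3 : (3 : ZMod p) ≠ 0 := three_nz hp2 hp3
  set m : ℕ := p / 2 with hm
  have hm2 : 2 * m = p - 1 := two_mul_half hp2
  have hmlt : m < p - 1 := by omega
  set c : ZMod p := 2⁻¹ with hc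
  have hcne : c ≠ 0 := inv_ne_zero h2
  have t2 : (2 : ZMod p) * c = 1 := mul_inv_cancel₀ h2
  set b : ZMod p := 1 - c ^ 2 with hb
  have h4b : (4 : ZMod p) * b = 3 := by linear_combination (-2*c - 1) * t2
  have hbne : b ≠ 0 := by
    intro h; rw [h, mul_zero] at h4b; exact h3 h4b.symm
  set S : ZMod p := ∑ w : ZMod p, (w ^ 2 + w + 1)⁻¹ with hS
  -- Step 1 : S = 1 + T p 0
  have step1 : S = 1 + T p 0 := by
    have hsplit : S = (0 ^ 2 + 0 + 1 : ZMod p)⁻¹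
        + ∑ w ∈ Finset.univ.erase (0 : ZMod p), (w ^ 2 + w + 1)⁻¹ :=
      (Finset.add_sum_erase _ _ (Finset.mem_univ 0)).symm
    have hu : ∑ w ∈ Finset.univ.erase (0 : ZMod p), (w ^ 2 + w + 1)⁻¹
        = T p 0 := by
      rw [Finset.sum_subtype (Finset.univ.erase (0 : ZMod p))
        (p := fun x : ZMod p => x ≠ 0) (by simp) (fun w => (w ^ 2 + w + 1)⁻¹)]
      rw [T]
      rw [← Equiv.sum_comp (unitsEquivNeZero (G₀ := ZMod p))
        (fun a : {a : ZMod p // a ≠ 0} => ((a : ZMod p) ^ 2 + (a : ZMod p) + 1)⁻¹)]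
      simp [unitsEquivNeZero]
    rw [hsplit, hu]
    norm_num
  -- Step 2 : S = ∑ u, (u^2+b)⁻¹
  have step2 : S = ∑ u : ZMod p, (u ^ 2 + b)⁻¹ := by
    rw [hS, ← Equiv.sum_comp (Equiv.addRight c) (fun u : ZMod p => (u ^ 2 + b)⁻¹)]
    refine Finset.sum_congr rfl fun w _ => ?_
    have : ((Equiv.addRight c) w) = w + c := rfl
    rw [this]
    congr 1
    linear_combination (-w) * t2
  -- Step 3+4 : split with the quadratic character
  have step3 : S = (∑ s : ZMod p, (s + b)⁻¹) + ∑ s : ZMod p, s ^ m * (s + b)⁻¹ := by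
    rw [step2, sum_sq_comp hp2 hp3 (fun s => (s + b)⁻¹), ← Finset.sum_add_distrib]
    refine Finset.sum_congr rfl fun s _ => ?_
    ring
  -- Step 5 : first sum vanishes
  have step5 : (∑ s : ZMod p, (s + b)⁻¹) = 0 := by
    rw [← Equiv.sum_comp (Equiv.subRight b) (fun s : ZMod p => (s + b)⁻¹)]
    have h1 : ∀ r : ZMod p, ((Equiv.subRight b r) + b)⁻¹ = r⁻¹ := by
      intro r; simp [Equiv.subRight]
    simp only [h1]
    have h2' : (∑ r : ZMod p, r⁻¹) = ∑ r : ZMod p, r := by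
      rw [← Equiv.sum_comp (Equiv.inv (ZMod p)) (fun r : ZMod p => r)]
      rfl
    rw [h2']
    have h3' : (∑ r : ZMod p, r) = -∑ r : ZMod p, r := by
      nth_rewrite 1 [← Equiv.sum_comp (Equiv.neg (ZMod p)) (fun r : ZMod p => r)]
      exact Finset.sum_neg_distrib (fun r : ZMod p => r)
    have h4' : (2 : ZMod p) * ∑ r : ZMod p, r = 0 := by linear_combination h3'
    rcases mul_eq_zero.mp h4' with h | h
    · exact absurd h h2
    · exact h
  -- K' and its doubling
  set Ksum : ZMod p := ∑ t : ZMod p, t ^ m * (t + 1)⁻¹ with hK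
  have hKflip : Ksum = ∑ t : ZMod p, t ^ m * t * (t + 1)⁻¹ := by
    rw [hK, ← Equiv.sum_comp (Equiv.inv (ZMod p))
      (fun t : ZMod p => t ^ m * (t + 1)⁻¹)]
    refine Finset.sum_congr rfl fun t _ => ?_
    have : (Equiv.inv (ZMod p)) t = t⁻¹ := rfl
    rw [this]
    rcases eq_or_ne t 0 with rfl | ht
    · have hm0 : m ≠ 0 := by omega
      simp [zero_pow hm0]
    · have h1 : (t⁻¹) ^ m = t ^ m := by
        rw [inv_pow]
        rcases ZMod.pow_div_two_eq_neg_one_or_one p ht with h | h <;> rw [← hm] at h <;>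
          rw [h] <;> norm_num
      rw [h1]
      rcases eq_or_ne t (-1) with rfl | ht1
      · have : (-1 : ZMod p)⁻¹ + 1 = 0 := by norm_num
        rw [this]
        simp
      · have htp1 : t + 1 ≠ 0 := fun h => ht1 (by linear_combination h)
        have h2' : t⁻¹ + 1 = t⁻¹ * (t + 1) := by
          rw [mul_add, inv_mul_cancel₀ ht, mul_one]
          exact add_comm _ _
        rw [h2', mul_inv, inv_inv]
        ring
  have hdouble : Ksum + Ksum = -(-1 : ZMod p) ^ m := by
    have h1 : Ksum + Ksum = ∑ t : ZMod p, t ^ m * ((t + 1) * (t + 1)⁻¹) := by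
      nth_rewrite 2 [hKflip]
      rw [hK, ← Finset.sum_add_distrib]
      exact Finset.sum_congr rfl fun t _ => by ring
    rw [h1]
    have h2' : ∀ t : ZMod p, t ^ m * ((t + 1) * (t + 1)⁻¹)
        = if t = -1 then 0 else t ^ m := by
      intro t
      rcases eq_or_ne t (-1) with rfl | ht
      · simp
      · have htp1 : t + 1 ≠ 0 := fun h => ht (by linear_combination h)
        rw [mul_inv_cancel₀ htp1, if_neg ht, mul_one]
    simp only [h2']
    have h3' : ∑ t : ZMod p, (if t = -1 then 0 else t ^ m)
        = (if (-1 : ZMod p) = -1 then 0 else (-1 : ZMod p) ^ m)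
          + ∑ t ∈ Finset.univ.erase (-1 : ZMod p), (if t = -1 then 0 else t ^ m) :=
      (Finset.add_sum_erase _ _ (Finset.mem_univ (-1 : ZMod p))).symm
    rw [h3', if_pos rfl, zero_add]
    have h4' : ∑ t ∈ Finset.univ.erase (-1 : ZMod p), (if t = -1 then 0 else t ^ m)
        = ∑ t ∈ Finset.univ.erase (-1 : ZMod p), t ^ m := by
      refine Finset.sum_congr rfl fun t ht => ?_
      rw [if_neg (Finset.mem_erase.mp ht).1]
    rw [h4', Finset.sum_erase_eq_sub (Finset.mem_univ (-1 : ZMod p)),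
      sum_all_pow hmlt, zero_sub]
  -- Step 6 : substitution s = b * t
  have step6 : (∑ s : ZMod p, s ^ m * (s + b)⁻¹) = b ^ m * b⁻¹ * Ksum := by
    rw [← Equiv.sum_comp (Equiv.mulLeft₀ b hbne)
      (fun s : ZMod p => s ^ m * (s + b)⁻¹), hK, Finset.mul_sum]
    refine Finset.sum_congr rfl fun t _ => ?_
    have he : (Equiv.mulLeft₀ b hbne) t = b * t := rfl
    rw [he]
    have h1 : b * t + b = b * (t + 1) := by ring
    rw [h1, mul_pow, mul_inv]
    ring
  -- the value of b^m * (-1)^m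
  have hbm : b ^ m * (-1 : ZMod p) ^ m = -1 := by
    have h1 : (-b : ZMod p) = -3 * c ^ 2 := by linear_combination (2*c + 1) * t2
    have h2' : (-b : ZMod p) ^ m = (-1) ^ m * b ^ m := by
      rw [← neg_one_mul, mul_pow]
    have h3' : ((-3 : ZMod p) * c ^ 2) ^ m = (-3 : ZMod p) ^ m * c ^ (2 * m) := by
      rw [mul_pow, ← pow_mul]
    have h4' : c ^ (2 * m) = 1 := by
      rw [hm2]; exact ZMod.pow_card_sub_one_eq_one hcne
    have h5' : (-3 : ZMod p) ^ m = -1 := chi_neg_three hp2 hp3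
    rw [h1, h3', h4', h5'] at h2'
    linear_combination -h2'
  have hbb : b * b⁻¹ = 1 := mul_inv_cancel₀ hbne
  have h2S : (2 : ZMod p) * S = b⁻¹ := by
    rw [step3, step5, zero_add, step6]
    linear_combination (b ^ m * b⁻¹) * hdouble - b⁻¹ * hbm
  have h2bS : (2 * b : ZMod p) * S = 1 := by linear_combination b * h2S + hbb
  have h3i : (3 : ZMod p) * 3⁻¹ = 1 := mul_inv_cancel₀ h3
  have hfin : (3 : ZMod p) * (S - 1) = -1 := by linear_combination 2 * h2bS - S * h4b
  have hT : T p 0 = S - 1 := by linear_combination -step1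
  rw [hT]
  linear_combination 3⁻¹ * hfin - (S - 1) * h3i
lemma h3i' (hp2 : p ≠ 2) (hp3 : p % 3 = 2) : (3 : ZMod p) * 3⁻¹ = 1 :=
  mul_inv_cancel₀ (three_nz hp2 hp3)

lemma T_one (hp2 : p ≠ 2) (hp3 : p % 3 = 2) : T p 1 = -(3⁻¹ : ZMod p) := by
  have e0 := T_rec hp2 hp3 0
  rw [if_pos (dvd_zero _)] at e0
  have hsym := T_symm hp2 hp3
  have hz := T_zero hp2 hp3
  have h3i := h3i' hp2 hp3
  linear_combination e0 - hsym - 2 * hz + h3i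

lemma T_two (hp2 : p ≠ 2) (hp3 : p % 3 = 2) : T p 2 = -(3⁻¹ : ZMod p) :=
  (T_symm hp2 hp3).trans (T_zero hp2 hp3)

lemma not_dvd_small {n : ℕ} (h1 : 1 ≤ n) (h2 : n < p - 1) : ¬ (p - 1) ∣ n :=
  fun h => absurd (Nat.le_of_dvd (by omega) h) (by omega)

lemma T_val (hp2 : p ≠ 2) (hp3 : p % 3 = 2) :
    ∀ n, 1 ≤ n → n ≤ p - 2 →
      T p n = if n % 3 = 0 then 2 * (3⁻¹ : ZMod p) else -(3⁻¹ : ZMod p) := by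
  have h5 := p_ge_5 hp2 hp3
  intro n
  induction n using Nat.strong_induction_on with
  | _ n ih =>
    intro hn1 hn2
    by_cases h4 : n < 4
    · interval_cases n
      · rw [if_neg (by norm_num)]; exact T_one hp2 hp3
      · rw [if_neg (by norm_num)]; exact T_two hp2 hp3
      · rw [if_pos (by norm_num)]
        have e1 := T_rec hp2 hp3 1
        rw [if_neg (not_dvd_small (by norm_num) (by omega))] at e1
        have h1 := T_one hp2 hp3
        have h2 := T_two hp2 hp3
        linear_combination e1 - h1 - h2
    · obtain ⟨k, rfl⟩ : ∃ k, n = k + 4 := ⟨n - 4, by omega⟩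
      have e1 := T_rec hp2 hp3 (k + 1)
      rw [if_neg (not_dvd_small (by omega) (by omega))] at e1
      have e2 := T_rec hp2 hp3 (k + 2)
      rw [if_neg (not_dvd_small (by omega) (by omega))] at e2
      have ihk := ih (k + 1) (by omega) (by omega) (by omega)
      have hmod : (k + 4) % 3 = (k + 1) % 3 := by omega
      rw [hmod]
      rw [show k + 1 + 2 = k + 3 from rfl] at e1
      rw [show k + 2 + 2 = k + 4 from rfl, show k + 2 + 1 = k + 3 from rfl] at e2
      linear_combination e2 - e1 + ihk
  
lemma T_top (hp2 : p ≠ 2) (hp3 : p % 3 = 2) : T p (p - 1) = T p 0 := by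
  rw [T, T]
  refine Finset.sum_congr rfl fun w _ => ?_
  rw [ZMod.pow_card_sub_one_eq_one w.ne_zero, pow_zero]



lemma succ_cast_ne_zero (i : Fin (p - 1)) : (((i : ℕ) + 1 : ℕ) : ZMod p) ≠ 0 := by
  have hi := i.2
  rw [Ne, ZMod.natCast_eq_zero_iff]
  intro h
  have := Nat.le_of_dvd (Nat.succ_pos _) h
  have := hp.out.two_le
  omega

/-- The bijection between `Fin (p-1)` and the units of `ZMod p`. -/
def uEquiv : Fin (p - 1) ≃ (ZMod p)ˣ where
  toFun i := Units.mk0 _ (succ_cast_ne_zero i)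
  invFun u := ⟨(u : ZMod p).val - 1, by
    have h1 : (u : ZMod p).val < p := ZMod.val_lt _
    have h2 : (u : ZMod p).val ≠ 0 := by
      rw [Ne, ZMod.val_eq_zero]; exact u.ne_zero
    omega⟩
  left_inv i := by
    have hi := i.2
    have := hp.out.two_le
    ext
    simp only [Units.val_mk0]
    rw [ZMod.val_natCast_of_lt (by omega)]
    omega
  right_inv u := by
    have h1 : (u : ZMod p).val < p := ZMod.val_lt _
    have h2 : (u : ZMod p).val ≠ 0 := by rw [Ne, ZMod.val_eq_zero]; exact u.ne_zero
    ext
    simp only [Units.val_mk0]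
    rw [show (u : ZMod p).val - 1 + 1 = (u : ZMod p).val by omega, ZMod.natCast_val,
      ZMod.cast_id]

lemma uEquiv_coe (i : Fin (p - 1)) : ((uEquiv i : ZMod p)) = ((i : ℕ) + 1 : ℕ) := rfl

lemma pow_card_sub_two {a : ZMod p} (ha : a ≠ 0) : a ^ (p - 2) = a⁻¹ := by
  have h2 := hp.out.two_le
  refine eq_inv_of_mul_eq_one_left ?_
  rw [← pow_succ, show (p - 2) + 1 = p - 1 by omega]
  exact ZMod.pow_card_sub_one_eq_one ha

lemma pow_red {a : ZMod p} (ha : a ≠ 0) (n : ℕ) : a ^ ((p - 1) + n) = a ^ n := by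
  rw [pow_add, ZMod.pow_card_sub_one_eq_one ha, one_mul]

lemma inv_pow_eq {a : ZMod p} (ha : a ≠ 0) {k : ℕ} (hk : k ≤ p - 1) :
    (a⁻¹) ^ k = a ^ (p - 1 - k) := by
  rw [inv_pow]
  refine (eq_inv_of_mul_eq_one_left ?_).symm
  rw [← pow_add, show p - 1 - k + k = p - 1 by omega]
  exact ZMod.pow_card_sub_one_eq_one ha

lemma entry_key (hp2 : p ≠ 2) (hp3 : p % 3 = 2) (x y : ZMod p) (hx : x ≠ 0) (hy : y ≠ 0)
    {k : ℕ} (hk : k ≤ p - 2) :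
    (x ^ 2 + x * (x * y⁻¹) + (x * y⁻¹) ^ 2) ^ (p - 2) * (x * y⁻¹) ^ (k + 2)
      = x ^ k * (y ^ (p - 1 - k) * (y ^ 2 + y + 1)⁻¹) := by
  have h5 := p_ge_5 hp2 hp3
  have hzne : x * y⁻¹ ≠ 0 := mul_ne_zero hx (inv_ne_zero hy)
  have hQ : y ^ 2 + y + 1 ≠ 0 := quad_ne_zero hp2 hp3 y
  have hbase : x ^ 2 + x * (x * y⁻¹) + (x * y⁻¹) ^ 2
      = (x * y⁻¹) ^ 2 * (y ^ 2 + y + 1) := by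
    field_simp
  calc (x ^ 2 + x * (x * y⁻¹) + (x * y⁻¹) ^ 2) ^ (p - 2) * (x * y⁻¹) ^ (k + 2)
      = ((x * y⁻¹) ^ 2 * (y ^ 2 + y + 1)) ^ (p - 2) * (x * y⁻¹) ^ (k + 2) := by rw [hbase]
    _ = (x * y⁻¹) ^ (2 * (p - 2)) * (y ^ 2 + y + 1) ^ (p - 2) * (x * y⁻¹) ^ (k + 2) := by
        rw [mul_pow, ← pow_mul]
    _ = (x * y⁻¹) ^ (2 * (p - 2) + (k + 2)) * (y ^ 2 + y + 1) ^ (p - 2) := by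
        rw [pow_add]; ring
    _ = (x * y⁻¹) ^ k * (y ^ 2 + y + 1)⁻¹ := by
        rw [show 2 * (p - 2) + (k + 2) = (p - 1) + ((p - 1) + k) by omega,
          pow_red hzne, pow_red hzne, pow_card_sub_two hQ]
    _ = x ^ k * (y ^ (p - 1 - k) * (y ^ 2 + y + 1)⁻¹) := by
        rw [mul_pow, inv_pow_eq hy (by omega : k ≤ p - 1)]
        ring

/-- The matrix of our quadratic-form inverses, indexed by units. -/
noncomputable def Nmat (p : ℕ) [Fact p.Prime] : Matrix (ZMod p)ˣ (ZMod p)ˣ (ZMod p) :=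
  Matrix.of fun u v => ((u : ZMod p) ^ 2 + u * v + v ^ 2) ^ (p - 2)

noncomputable def Vmat (p : ℕ) [Fact p.Prime] : Matrix (ZMod p)ˣ (ZMod p)ˣ (ZMod p) :=
  Matrix.of fun u k => (u : ZMod p) ^ ((uEquiv.symm k : Fin (p - 1)) : ℕ)

noncomputable def Wmat (p : ℕ) [Fact p.Prime] : Matrix (ZMod p)ˣ (ZMod p)ˣ (ZMod p) :=
  Matrix.of fun u k => (u : ZMod p) ^ (((uEquiv.symm k : Fin (p - 1)) : ℕ) + 2)

noncomputable def dvec (p : ℕ) [Fact p.Prime] : (ZMod p)ˣ → ZMod p :=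
  fun k => T p (p - 1 - ((uEquiv.symm k : Fin (p - 1)) : ℕ))

lemma key_identity (hp2 : p ≠ 2) (hp3 : p % 3 = 2) :
    Nmat p * Wmat p = Vmat p * Matrix.diagonal (dvec p) := by
  ext u k
  rw [Matrix.mul_diagonal]
  rw [Matrix.mul_apply]
  set κ : ℕ := ((uEquiv.symm k : Fin (p - 1)) : ℕ) with hκ
  have hκle : κ ≤ p - 2 := by
    have := (uEquiv.symm k).2
    omega
  have hsub : ∑ v : (ZMod p)ˣ, Nmat p u v * Wmat p v k
      = ∑ w : (ZMod p)ˣ, Nmat p u (u * w⁻¹) * Wmat p (u * w⁻¹) k := by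
    rw [← Equiv.sum_comp ((Equiv.inv (ZMod p)ˣ).trans (Equiv.mulLeft u))
      (fun v => Nmat p u v * Wmat p v k)]
    rfl
  rw [hsub]
  have hterm : ∀ w : (ZMod p)ˣ, Nmat p u (u * w⁻¹) * Wmat p (u * w⁻¹) k
      = (u : ZMod p) ^ κ
        * ((w : ZMod p) ^ (p - 1 - κ) * ((w : ZMod p) ^ 2 + w + 1)⁻¹) := by
    intro w
    have hcoe : ((u * w⁻¹ : (ZMod p)ˣ) : ZMod p) = (u : ZMod p) * (w : ZMod p)⁻¹ := by
      rw [Units.val_mul, Units.val_inv_eq_inv_val]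
    show ((u : ZMod p) ^ 2 + u * ((u * w⁻¹ : (ZMod p)ˣ) : ZMod p)
        + ((u * w⁻¹ : (ZMod p)ˣ) : ZMod p) ^ 2) ^ (p - 2)
        * ((u * w⁻¹ : (ZMod p)ˣ) : ZMod p) ^ (κ + 2) = _
    rw [hcoe]
    exact entry_key hp2 hp3 (u : ZMod p) (w : ZMod p) u.ne_zero w.ne_zero hκle
  rw [Finset.sum_congr rfl (fun w _ => hterm w), ← Finset.mul_sum]
  show (u : ZMod p) ^ κ * _ = (u : ZMod p) ^ κ * T p (p - 1 - κ)
  rw [T]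
lemma W_eq : Wmat p = Matrix.diagonal (fun u : (ZMod p)ˣ => (u : ZMod p) ^ 2) * Vmat p := by
  ext u k
  rw [Matrix.diagonal_mul]
  show (u : ZMod p) ^ (((uEquiv.symm k : Fin (p - 1)) : ℕ) + 2)
      = (u : ZMod p) ^ 2 * (u : ZMod p) ^ ((uEquiv.symm k : Fin (p - 1)) : ℕ)
  rw [pow_add]
  ring

lemma V_det : (Vmat p).det
    = (Matrix.vandermonde fun i : Fin (p - 1) => (((i : ℕ) + 1 : ℕ) : ZMod p)).det := by
  rw [← Matrix.det_submatrix_equiv_self uEquiv (Vmat p)]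
  congr 1
  ext i j
  show (uEquiv i : ZMod p) ^ ((uEquiv.symm (uEquiv j) : Fin (p - 1)) : ℕ) = _
  rw [Equiv.symm_apply_apply, uEquiv_coe]
  rfl

lemma V_det_ne_zero : (Vmat p).det ≠ 0 := by
  rw [V_det, Matrix.det_vandermonde]
  rw [Finset.prod_ne_zero_iff]
  intro i _
  rw [Finset.prod_ne_zero_iff]
  intro j hj
  have hij : i < j := Finset.mem_Ioi.mp hj
  intro h
  have h2 : (((j : ℕ) + 1 : ℕ) : ZMod p) = (((i : ℕ) + 1 : ℕ) : ZMod p) := by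
    linear_combination h
  have h3 := congrArg ZMod.val h2
  have hjlt := j.2
  have hilt := i.2
  have := hp.out.two_le
  rw [ZMod.val_natCast_of_lt (by omega), ZMod.val_natCast_of_lt (by omega)] at h3
  omega

lemma N_det (hp2 : p ≠ 2) (hp3 : p % 3 = 2) :
    (∏ u : (ZMod p)ˣ, (u : ZMod p) ^ 2) * (Nmat p).det = ∏ k : (ZMod p)ˣ, dvec p k := by
  have h1 := congrArg Matrix.det (key_identity hp2 hp3)
  rw [Matrix.det_mul, Matrix.det_mul, Matrix.det_diagonal, W_eq, Matrix.det_mul,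
    Matrix.det_diagonal] at h1
  have h2 : (Vmat p).det * ((∏ u : (ZMod p)ˣ, (u : ZMod p) ^ 2) * (Nmat p).det)
      = (Vmat p).det * ∏ k : (ZMod p)ˣ, dvec p k := by linear_combination h1
  exact mul_left_cancel₀ V_det_ne_zero h2

lemma dvec_val (hp2 : p ≠ 2) (hp3 : p % 3 = 2) (k : (ZMod p)ˣ) :
    dvec p k = if ((uEquiv.symm k : Fin (p - 1)) : ℕ) % 3 = 1
      then 2 * (3⁻¹ : ZMod p) else -(3⁻¹ : ZMod p) := by
  have h5 := p_ge_5 hp2 hp3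
  set i : ℕ := ((uEquiv.symm k : Fin (p - 1)) : ℕ) with hi
  have hile : i ≤ p - 2 := by have := (uEquiv.symm k).2; omega
  rw [dvec]
  rcases Nat.eq_zero_or_pos i with h0 | h0
  · rw [← hi, h0]
    rw [if_neg (by omega)]
    simpa using (T_top hp2 hp3).trans (T_zero hp2 hp3)
  · rw [← hi]
    have hval := T_val hp2 hp3 (p - 1 - i) (by omega) (by omega)
    by_cases h : i % 3 = 1
    · rw [if_pos h, hval, if_pos (by omega)]
    · rw [if_neg h, hval, if_neg (by omega)]

lemma count13 : ∀ n : ℕ, ((Finset.range n).filter (fun i => i % 3 = 1)).card = (n + 1) / 3 := by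
  intro n
  induction n with
  | zero => simp
  | succ n ih =>
    rw [Finset.range_add_one, Finset.filter_insert]
    by_cases h : n % 3 = 1
    · rw [if_pos h, Finset.card_insert_of_notMem (by simp), ih]
      omega
    · rw [if_neg h, ih]
      omega

lemma dvec_prod (hp2 : p ≠ 2) (hp3 : p % 3 = 2) :
    ∏ k : (ZMod p)ˣ, dvec p k = -((2 : ZMod p) ^ ((p - 2) / 3)) := by
  classical
  have h5 := p_ge_5 hp2 hp3
  set q : ℕ := (p - 2) / 3 with hq
  have hpq : p = 3 * q + 2 := by omega
  have h1 : ∏ k : (ZMod p)ˣ, dvec p k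
      = ∏ i : Fin (p - 1), (if (i : ℕ) % 3 = 1 then 2 * (3⁻¹ : ZMod p) else -(3⁻¹ : ZMod p)) := by
    rw [Finset.prod_congr rfl (fun k _ => dvec_val hp2 hp3 k)]
    exact Equiv.prod_comp uEquiv.symm
      (fun i : Fin (p - 1) => if (i : ℕ) % 3 = 1 then 2 * (3⁻¹ : ZMod p) else -(3⁻¹ : ZMod p))
  rw [h1, Fin.prod_univ_eq_prod_range
    (fun i : ℕ => if i % 3 = 1 then 2 * (3⁻¹ : ZMod p) else -(3⁻¹ : ZMod p)) (p - 1)]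
  rw [Finset.prod_ite]
  rw [Finset.prod_const, Finset.prod_const, count13 (p - 1)]
  have hcompl : ((Finset.range (p - 1)).filter (fun i => ¬ i % 3 = 1)).card
      = (p - 1) - (p - 1 + 1) / 3 := by
    have := Finset.card_filter_add_card_filter_not
      (s := Finset.range (p - 1)) (p := fun i => i % 3 = 1)
    rw [count13 (p - 1), Finset.card_range] at this
    omega
  rw [hcompl]
  have hM : (p - 1 + 1) / 3 = q := by omega
  have hM2 : (p - 1) - q = 2 * q + 1 := by omega
  rw [hM, hM2]
  -- now pure algebra
  have h3 : (3 : ZMod p) ≠ 0 := three_nz hp2 hp3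
  have h3i : (3⁻¹ : ZMod p) ≠ 0 := inv_ne_zero h3
  have hinv1 : (3⁻¹ : ZMod p) ^ (p - 1) = 1 := ZMod.pow_card_sub_one_eq_one h3i
  calc (2 * (3⁻¹ : ZMod p)) ^ q * (-(3⁻¹ : ZMod p)) ^ (2 * q + 1)
      = (2 : ZMod p) ^ q * (3⁻¹ : ZMod p) ^ q
        * ((-1 : ZMod p) ^ (2 * q + 1) * (3⁻¹ : ZMod p) ^ (2 * q + 1)) := by
        rw [mul_pow, neg_pow]
    _ = -((2 : ZMod p) ^ q) * (3⁻¹ : ZMod p) ^ (q + (2 * q + 1)) := by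
        rw [Odd.neg_one_pow ⟨q, by omega⟩, pow_add]
        ring
    _ = -((2 : ZMod p) ^ q) := by
        rw [show q + (2 * q + 1) = p - 1 by omega, hinv1, mul_one]

lemma N_det_final (hp2 : p ≠ 2) (hp3 : p % 3 = 2) :
    ∃ z : ZMod p, z ≠ 0 ∧ (Nmat p).det = -2 * z ^ 2 := by
  have h5 := p_ge_5 hp2 hp3
  set q : ℕ := (p - 2) / 3 with hq
  have hqodd : ∃ s, q = s * 2 + 1 := by
    obtain ⟨t, ht⟩ := hp.out.odd_of_ne_two hp2
    rcases Nat.even_or_odd q with he | ho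
    · exfalso
      obtain ⟨r, hr⟩ := he
      omega
    · obtain ⟨s, hs⟩ := ho; exact ⟨s, by omega⟩
  obtain ⟨s, hs⟩ := hqodd
  set P : ZMod p := ∏ u : (ZMod p)ˣ, (u : ZMod p) with hP
  have hPne : P ≠ 0 := by
    rw [hP, Finset.prod_ne_zero_iff]
    intro u _
    exact u.ne_zero
  have hP2 : ∏ u : (ZMod p)ˣ, (u : ZMod p) ^ 2 = P ^ 2 := by
    rw [hP, ← Finset.prod_pow]
  have hN := N_det hp2 hp3
  rw [hP2, dvec_prod hp2 hp3, ← hq] at hN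
  refine ⟨2 ^ s * P⁻¹, mul_ne_zero (pow_ne_zero s (two_nz hp2 hp3)) (inv_ne_zero hPne), ?_⟩
  have hPP : P * P⁻¹ = 1 := mul_inv_cancel₀ hPne
  have h2q : (2 : ZMod p) ^ q = 2 * ((2 : ZMod p) ^ s) ^ 2 := by
    rw [hs, pow_succ, pow_mul]
    ring
  apply mul_left_cancel₀ (pow_ne_zero 2 hPne)
  rw [hN]
  rw [h2q]
  linear_combination (2 * ((2:ZMod p)^s)^2 * (P * P⁻¹ + 1)) * hPP
end St2

/-- `Dp p b c` is the determinant of the `(p-1) × (p-1)` matrix whose `(i,j)`-entry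
(for `1 ≤ i, j ≤ p-1`) is `(i² + b·i·j + c·j²)^(p-2)`. -/
noncomputable def Dp (p : ℕ) (b c : ℤ) : ℤ :=
  Matrix.det (Matrix.of fun i j : Fin (p - 1) =>
    (((i : ℕ) + 1 : ℤ) ^ 2 + b * ((i : ℕ) + 1) * ((j : ℕ) + 1)
      + c * ((j : ℕ) + 1) ^ 2) ^ (p - 2))

namespace St2

lemma cast_Dp {p : ℕ} [hp : Fact p.Prime] :
    ((Dp p 1 1 : ℤ) : ZMod p) = (Nmat p).det := by
  rw [Dp, ← Matrix.det_submatrix_equiv_self uEquiv (Nmat p)]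
  rw [show (((Matrix.of fun i j : Fin (p - 1) =>
    (((i : ℕ) + 1 : ℤ) ^ 2 + 1 * ((i : ℕ) + 1) * ((j : ℕ) + 1)
      + 1 * ((j : ℕ) + 1) ^ 2) ^ (p - 2)).det : ℤ) : ZMod p)
    = ((Matrix.of fun i j : Fin (p - 1) =>
    (((i : ℕ) + 1 : ℤ) ^ 2 + 1 * ((i : ℕ) + 1) * ((j : ℕ) + 1)
      + 1 * ((j : ℕ) + 1) ^ 2) ^ (p - 2)).map (Int.cast : ℤ → ZMod p)).det
    from RingHom.map_det (Int.castRingHom (ZMod p)) _]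
  congr 1
  ext i j
  show ((((i : ℕ) + 1 : ℤ) ^ 2 + 1 * ((i : ℕ) + 1) * ((j : ℕ) + 1)
      + 1 * ((j : ℕ) + 1) ^ 2) ^ (p - 2) : ℤ) = (((uEquiv i : ZMod p)) ^ 2
      + (uEquiv i : ZMod p) * (uEquiv j : ZMod p) + (uEquiv j : ZMod p) ^ 2) ^ (p - 2)
  rw [uEquiv_coe, uEquiv_coe]
  push_cast
  ring

end St2

theorem stmt2 (p : ℕ) [Fact p.Prime] (hp2 : p ≠ 2) (hp3 : p % 3 = 2) :
    legendreSym p (Dp p 1 1) = legendreSym p (-2) := by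
  obtain ⟨z, hz, hdet⟩ := St2.N_det_final hp2 hp3
  have hcast : ((Dp p 1 1 : ℤ) : ZMod p) = -2 * z ^ 2 := St2.cast_Dp.trans hdet
  show quadraticChar (ZMod p) ((Dp p 1 1 : ℤ) : ZMod p)
      = quadraticChar (ZMod p) ((-2 : ℤ) : ZMod p)
  rw [hcast, show ((-2 : ℤ) : ZMod p) = (-2 : ZMod p) by push_cast; ring,
    map_mul, quadraticChar_sq_one' hz, mul_one]
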